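/- arXiv:2410.08838 — 2 statements merged into one kernel-verified Lean document; each statement's English description precedes it below -/
import Mathlib

section
/- Let H be an infinite-dimensional complex separable Hilbert space and let T ∈ B(H) be hypercyclic. Then T satisfies property (V_E) if and only if E(T) = ∅. -/
noncomputable section

open Set MeasureTheory

/-- The operator `T - λ·I`. -/
def opShift {E : Type*} [NormedAddCommGroup E] [InnerProductSpace ℂ E]
    (T : E →L[ℂ] E) (lam : ℂ) : E →L[ℂ] E :=
  T - lam • ContinuousLinearMap.id ℂ E

/-- Upper semi-Fredholm: closed range and finite-dimensional kernel. -/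
def IsUSF {E : Type*} [NormedAddCommGroup E] [InnerProductSpace ℂ E]
    (T : E →L[ℂ] E) : Prop :=
  IsClosed (LinearMap.range (T : E →ₗ[ℂ] E) : Set E) ∧ FiniteDimensional ℂ (LinearMap.ker (T : E →ₗ[ℂ] E))

/-- Lower semi-Fredholm: closed range and finite codimension. -/
def IsLSF {E : Type*} [NormedAddCommGroup E] [InnerProductSpace ℂ E]
    (T : E →L[ℂ] E) : Prop :=
  IsClosed (LinearMap.range (T : E →ₗ[ℂ] E) : Set E) ∧ FiniteDimensional ℂ (E ⧸ LinearMap.range (T : E →ₗ[ℂ] E))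

/-- Fredholm operator. -/
def IsFredholmOp {E : Type*} [NormedAddCommGroup E] [InnerProductSpace ℂ E]
    (T : E →L[ℂ] E) : Prop :=
  IsUSF T ∧ IsLSF T

/-- `ind T ≤ 0`, i.e. `dim ker T ≤ codim ran T`. -/
def indexNonpos {E : Type*} [NormedAddCommGroup E] [InnerProductSpace ℂ E]
    (T : E →L[ℂ] E) : Prop :=
  Module.rank ℂ (LinearMap.ker (T : E →ₗ[ℂ] E)) ≤ Module.rank ℂ (E ⧸ LinearMap.range (T : E →ₗ[ℂ] E))

/-- `ind T = 0`, i.e. `dim ker T = codim ran T`. -/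
def indexZero {E : Type*} [NormedAddCommGroup E] [InnerProductSpace ℂ E]
    (T : E →L[ℂ] E) : Prop :=
  Module.rank ℂ (LinearMap.ker (T : E →ₗ[ℂ] E)) = Module.rank ℂ (E ⧸ LinearMap.range (T : E →ₗ[ℂ] E))

/-- The approximate point spectrum: `λ` such that `T - λ` is not bounded below. -/
def specA {E : Type*} [NormedAddCommGroup E] [InnerProductSpace ℂ E]
    (T : E →L[ℂ] E) : Set ℂ :=
  {lam | ¬ ∃ c > 0, ∀ x : E, c * ‖x‖ ≤ ‖T x - lam • x‖}

/-- The upper semi-Weyl spectrum. -/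
def specUW {E : Type*} [NormedAddCommGroup E] [InnerProductSpace ℂ E]
    (T : E →L[ℂ] E) : Set ℂ :=
  {lam | ¬ (IsUSF (opShift T lam) ∧ indexNonpos (opShift T lam))}

/-- The Weyl spectrum. -/
def specW {E : Type*} [NormedAddCommGroup E] [InnerProductSpace ℂ E]
    (T : E →L[ℂ] E) : Set ℂ :=
  {lam | ¬ (IsFredholmOp (opShift T lam) ∧ indexZero (opShift T lam))}

/-- `lam` is an isolated point of the set `S`. -/
def IsIsolatedIn (S : Set ℂ) (lam : ℂ) : Prop :=
  lam ∈ S ∧ ∃ ε > 0, S ∩ Metric.ball lam ε = {lam}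

/-- `E(T)`: the isolated points of the spectrum that are eigenvalues. -/
def Eset {E : Type*} [NormedAddCommGroup E] [InnerProductSpace ℂ E]
    (T : E →L[ℂ] E) : Set ℂ :=
  {lam | IsIsolatedIn (spectrum ℂ T) lam ∧ ∃ x : E, x ≠ 0 ∧ T x = lam • x}

/-- `E₀(T)`: the isolated points of the spectrum that are eigenvalues of finite multiplicity. -/
def E0set {E : Type*} [NormedAddCommGroup E] [InnerProductSpace ℂ E]
    (T : E →L[ℂ] E) : Set ℂ :=
  {lam | IsIsolatedIn (spectrum ℂ T) lam ∧ (∃ x : E, x ≠ 0 ∧ T x = lam • x) ∧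
    FiniteDimensional ℂ (LinearMap.ker ((opShift T lam : E →L[ℂ] E) : E →ₗ[ℂ] E))}

/-- Property `(UW_E)`: `σ_a(T) \ σ_uw(T) = E(T)`. -/
def PropUWE {E : Type*} [NormedAddCommGroup E] [InnerProductSpace ℂ E]
    (T : E →L[ℂ] E) : Prop :=
  specA T \ specUW T = Eset T

/-- Property `(V_E)`: `σ(T) \ σ_uw(T) = E(T)`. -/
def PropVE {E : Type*} [NormedAddCommGroup E] [InnerProductSpace ℂ E]
    (T : E →L[ℂ] E) : Prop :=
  spectrum ℂ T \ specUW T = Eset T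

/-- Property `(W_E)`: `σ(T) \ σ_w(T) = E(T)`. -/
def PropWE {E : Type*} [NormedAddCommGroup E] [InnerProductSpace ℂ E]
    (T : E →L[ℂ] E) : Prop :=
  spectrum ℂ T \ specW T = Eset T

/-- Weyl's theorem: `σ(T) \ σ_w(T) = E₀(T)`. -/
def WeylsTheorem {E : Type*} [NormedAddCommGroup E] [InnerProductSpace ℂ E]
    (T : E →L[ℂ] E) : Prop :=
  spectrum ℂ T \ specW T = E0set T

/-- `T` is hypercyclic: some orbit is dense. -/
def Hypercyclic {E : Type*} [NormedAddCommGroup E] [InnerProductSpace ℂ E]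
    (T : E →L[ℂ] E) : Prop :=
  ∃ x : E, Dense (Set.range fun n : ℕ => (T ^ n) x)

/-- `T` is supercyclic: the scaled orbit of some vector is dense. -/
def Supercyclic {E : Type*} [NormedAddCommGroup E] [InnerProductSpace ℂ E]
    (T : E →L[ℂ] E) : Prop :=
  ∃ x : E, Dense {y : E | ∃ (c : ℂ) (n : ℕ), y = c • (T ^ n) x}

/-- The ascent of `T`, as an extended natural number. -/
def ascent {E : Type*} [NormedAddCommGroup E] [InnerProductSpace ℂ E]
    (T : E →L[ℂ] E) : ℕ∞ :=
  sInf ((fun n : ℕ => (n : ℕ∞)) '' {n : ℕ | LinearMap.ker ((T ^ n : E →L[ℂ] E) : E →ₗ[ℂ] E) = LinearMap.ker ((T ^ (n + 1) : E →L[ℂ] E) : E →ₗ[ℂ] E)})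

/-- The descent of `T`, as an extended natural number. -/
def descent {E : Type*} [NormedAddCommGroup E] [InnerProductSpace ℂ E]
    (T : E →L[ℂ] E) : ℕ∞ :=
  sInf ((fun n : ℕ => (n : ℕ∞)) ''
    {n : ℕ | LinearMap.range ((T ^ n : E →L[ℂ] E) : E →ₗ[ℂ] E) = LinearMap.range ((T ^ (n + 1) : E →L[ℂ] E) : E →ₗ[ℂ] E)})

/-- Browder operator: Fredholm with equal finite ascent and descent. -/
def IsBrowder {E : Type*} [NormedAddCommGroup E] [InnerProductSpace ℂ E]
    (T : E →L[ℂ] E) : Prop :=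
  IsFredholmOp T ∧ ascent T = descent T ∧ ascent T < ⊤

/-- The Browder spectrum. -/
def specB {E : Type*} [NormedAddCommGroup E] [InnerProductSpace ℂ E]
    (T : E →L[ℂ] E) : Set ℂ :=
  {lam | ¬ IsBrowder (opShift T lam)}

/-- The essential spectrum. -/
def specE {E : Type*} [NormedAddCommGroup E] [InnerProductSpace ℂ E]
    (T : E →L[ℂ] E) : Set ℂ :=
  {lam | ¬ IsFredholmOp (opShift T lam)}

/-- The left essential spectrum. -/
def specLE {E : Type*} [NormedAddCommGroup E] [InnerProductSpace ℂ E]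
    (T : E →L[ℂ] E) : Set ℂ :=
  {lam | ¬ IsUSF (opShift T lam)}

/-- The right essential spectrum. -/
def specRE {E : Type*} [NormedAddCommGroup E] [InnerProductSpace ℂ E]
    (T : E →L[ℂ] E) : Set ℂ :=
  {lam | ¬ IsLSF (opShift T lam)}

private theorem key_aux {H : Type*} [NormedAddCommGroup H] [InnerProductSpace ℂ H] [CompleteSpace H]
    (T : H →L[ℂ] H) (lam : ℂ)
    (hhyp : ∃ x : H, Dense (Set.range fun n : ℕ => (T ^ n) x))
    (hclosed : IsClosed ((LinearMap.range ((T - lam • ContinuousLinearMap.id ℂ H : H →L[ℂ] H) : H →ₗ[ℂ] H) : Submodule ℂ H) : Set H))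
    (hind : Module.rank ℂ (LinearMap.ker ((T - lam • ContinuousLinearMap.id ℂ H : H →L[ℂ] H) : H →ₗ[ℂ] H)) ≤
      Module.rank ℂ (H ⧸ LinearMap.range ((T - lam • ContinuousLinearMap.id ℂ H : H →L[ℂ] H) : H →ₗ[ℂ] H)))
    (hspec : lam ∈ spectrum ℂ T) : False := by
  obtain ⟨x, hx⟩ := hhyp
  set S : H →L[ℂ] H := T - lam • ContinuousLinearMap.id ℂ H with hS
  set K : Submodule ℂ H := LinearMap.range (S : H →ₗ[ℂ] H) with hK
  haveI : CompleteSpace K := hclosed.completeSpace_coe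
  have Ktop : K = ⊤ := by
    by_contra hKtop
    have hKbot : Kᗮ ≠ ⊥ := fun h => hKtop (Submodule.orthogonal_eq_bot_iff.mp h)
    obtain ⟨y, hyK, hy0⟩ := Submodule.ne_bot_iff _ |>.mp hKbot
    set f : H →L[ℂ] ℂ := innerSL ℂ y with hf
    have hfS : ∀ z : H, f (S z) = 0 := by
      intro z
      have h1 : inner ℂ (S z) y = (0 : ℂ) := hyK (S z) ⟨z, rfl⟩
      simpa [hf] using inner_eq_zero_symm.mp h1
    have hstep : ∀ z : H, f (T z) = lam * f z := by
      intro z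
      have := hfS z
      simp only [hS, ContinuousLinearMap.sub_apply, ContinuousLinearMap.smul_apply,
        ContinuousLinearMap.id_apply, map_sub, _root_.map_smul, smul_eq_mul] at this
      exact sub_eq_zero.mp this
    have horbit : ∀ n : ℕ, f ((T ^ n) x) = lam ^ n * f x := by
      intro n
      induction n with
      | zero => simp
      | succ n ih =>
        rw [pow_succ', ContinuousLinearMap.mul_apply, hstep, ih, pow_succ']
        ring
    have hfy : f y ≠ 0 := by
      simpa [hf] using (inner_self_ne_zero (𝕜 := ℂ)).mpr hy0
    have fsurj : Function.Surjective f := by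
      intro w
      exact ⟨(w / f y) • y, by simp [div_mul_cancel₀ _ hfy]⟩
    have hd : DenseRange (⇑f ∘ fun n : ℕ => (T ^ n) x) :=
      DenseRange.comp fsurj.denseRange hx f.continuous
    have hd' : DenseRange (fun n : ℕ => lam ^ n * f x) := by
      have : (⇑f ∘ fun n : ℕ => (T ^ n) x) = fun n : ℕ => lam ^ n * f x := by
        funext n; exact horbit n
      rwa [this] at hd
    set c : ℂ := f x with hc
    by_cases hlam : ‖lam‖ ≤ 1 ∨ c = 0
    · obtain ⟨n, hn⟩ := Metric.denseRange_iff.mp hd' ((‖c‖ + 1 : ℝ) : ℂ) 1 one_pos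
      have hb : ‖lam ^ n * c‖ ≤ ‖c‖ := by
        rcases hlam with h | h
        · rw [norm_mul, norm_pow]
          calc ‖lam‖ ^ n * ‖c‖ ≤ 1 * ‖c‖ := by
                apply mul_le_mul_of_nonneg_right (pow_le_one₀ (norm_nonneg _) h)
                  (norm_nonneg _)
            _ = ‖c‖ := one_mul _
        · simp [h]
      have hdist : (1 : ℝ) ≤ dist ((‖c‖ + 1 : ℝ) : ℂ) (lam ^ n * c) := by
        have htri := norm_add_le (((‖c‖ + 1 : ℝ) : ℂ) - lam ^ n * c) (lam ^ n * c)
        rw [sub_add_cancel] at htri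
        rw [Complex.dist_eq]
        have habs : ‖((‖c‖ + 1 : ℝ) : ℂ)‖ = ‖c‖ + 1 := by
          rw [Complex.norm_real, Real.norm_eq_abs]
          exact abs_of_nonneg (by positivity)
        nlinarith
      linarith
    · push_neg at hlam
      obtain ⟨hlam1, hc0⟩ := hlam
      have hcpos : 0 < ‖c‖ := norm_pos_iff.mpr hc0
      obtain ⟨n, hn⟩ := Metric.denseRange_iff.mp hd' 0 (‖c‖) hcpos
      have hb : ‖c‖ ≤ ‖lam ^ n * c‖ := by
        rw [norm_mul, norm_pow]
        nlinarith [one_le_pow₀ (le_of_lt hlam1) (n := n)]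
      rw [dist_comm, Complex.dist_eq, sub_zero] at hn
      linarith
  -- now K = ⊤
  haveI hsub : Subsingleton (H ⧸ K) := Submodule.Quotient.subsingleton_iff.mpr Ktop
  have hrank0 : Module.rank ℂ (H ⧸ K) = 0 := rank_subsingleton' ℂ _
  have hker0 : Module.rank ℂ (LinearMap.ker (S : H →ₗ[ℂ] H)) = 0 := le_antisymm (hrank0 ▸ hind) zero_le
  have hkerbot : LinearMap.ker (S : H →ₗ[ℂ] H) = ⊥ := Submodule.rank_eq_zero.mp hker0
  have hbij : Function.Bijective S := by
    constructor
    · exact LinearMap.ker_eq_bot.mp hkerbot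
    · exact LinearMap.range_eq_top.mp Ktop
  have hunit : IsUnit S := ContinuousLinearMap.isUnit_iff_bijective.mpr hbij
  have : IsUnit (algebraMap ℂ (H →L[ℂ] H) lam - T) := by
    have : algebraMap ℂ (H →L[ℂ] H) lam - T = -S := by
      rw [Algebra.algebraMap_eq_smul_one, hS]
      ext z; simp
    rw [this]
    exact hunit.neg
  exact spectrum.notMem_iff.mpr this hspec


/-- a hypercyclic operator satisfies property `(V_E)` iff `E(T) = ∅`. -/
theorem hypercyclic_propVE_iff_Eset_empty
    {H : Type*} [NormedAddCommGroup H] [InnerProductSpace ℂ H] [CompleteSpace H]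
    [TopologicalSpace.SeparableSpace H] (hinf : ¬ FiniteDimensional ℂ H)
    (T : H →L[ℂ] H) (hT : Hypercyclic T) :
    PropVE T ↔ Eset T = ∅ := by
  have hsub : spectrum ℂ T ⊆ specUW T := by
    intro lam hlam
    intro hcon
    obtain ⟨⟨hcl, hker⟩, hind⟩ := hcon
    exact key_aux T lam hT hcl hind hlam
  have hdiff : spectrum ℂ T \ specUW T = ∅ := Set.diff_eq_empty.mpr hsub
  unfold PropVE
  rw [hdiff]
  exact eq_comm
end
end

section
/- Let W be the operator on ℓ²(ℕ) (with orthonormal basis (e_n)_{n≥0}) defined by W e₀ = 0 and W e_n = √(n/(n+1)) e_{n−1} for n ≥ 1. Then W satisfies property (V_E), and consequently property (UW_E); moreover the Weyl spectrum σ_w(W) and the upper semi-Weyl spectrum σ_uw(W) have no isolated points. -/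
noncomputable section

open Set MeasureTheory

/-- The Hilbert space `ℓ²(ℕ)`. -/
abbrev l2 := lp (fun _ : ℕ => ℂ) 2

open scoped ENNReal NNReal

instance : Nontrivial l2 := by
  refine ⟨0, lp.single 2 0 (1 : ℂ), fun h => ?_⟩
  have h0 := congrArg (fun f : l2 => (f : ℕ → ℂ) 0) h
  simp only [lp.single_apply_self] at h0
  exact zero_ne_one (by exact_mod_cast h0)

namespace St17

def wt (k : ℕ) : ℝ := Real.sqrt (((k : ℝ) + 1) / ((k : ℝ) + 2))

lemma wt_pos (k : ℕ) : 0 < wt k := Real.sqrt_pos.2 (by positivity)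

lemma wt_le_one (k : ℕ) : wt k ≤ 1 := by
  rw [wt]
  rw [Real.sqrt_le_one]
  rw [div_le_one (by positivity)]; linarith

lemma wt_mul (k : ℕ) : wt k * Real.sqrt ((k : ℝ) + 2) = Real.sqrt ((k : ℝ) + 1) := by
  rw [wt, ← Real.sqrt_mul (by positivity)]
  congr 1
  field_simp

lemma opShift_eval {E : Type*} [NormedAddCommGroup E] [InnerProductSpace ℂ E]
    (T : E →L[ℂ] E) (lam : ℂ) (x : E) : opShift T lam x = T x - lam • x := by
  simp [opShift]

lemma opShift_apply (W : l2 →L[ℂ] l2) (lam : ℂ) (x : l2) (k : ℕ) :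
    (opShift W lam x) k = (W x) k - lam * x k := by
  rw [opShift_eval]
  rw [lp.coeFn_sub]
  simp [lp.coeFn_smul]

lemma norm_sq (f : l2) : ‖f‖ ^ 2 = ∑' k, ‖f k‖ ^ 2 := by
  have h := lp.norm_rpow_eq_tsum (p := (2 : ℝ≥0∞)) (by norm_num) f
  simp only [ENNReal.toReal_ofNat] at h
  calc ‖f‖ ^ 2 = ‖f‖ ^ (2 : ℝ) := by rw [Real.rpow_two]
    _ = ∑' k, ‖f k‖ ^ (2 : ℝ) := h
    _ = ∑' k, ‖f k‖ ^ 2 := by refine tsum_congr fun k => ?_; rw [Real.rpow_two]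

lemma summable_sq (f : l2) : Summable fun k => ‖f k‖ ^ 2 := by
  have h := (lp.memℓp f).summable (p := (2 : ℝ≥0∞)) (by norm_num)
  simp only [ENNReal.toReal_ofNat] at h
  exact h.congr fun k => by rw [Real.rpow_two]

lemma memℓp_two_of_sq {f : ℕ → ℂ} (h : Summable fun k => ‖f k‖ ^ 2) : Memℓp f 2 := by
  apply memℓp_gen
  simp only [ENNReal.toReal_ofNat]
  exact h.congr fun k => by rw [← Real.rpow_two]


variable {W : l2 →L[ℂ] l2}
  (hW : ∀ (x : l2) (k : ℕ), (W x) k =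
      ((Real.sqrt (((k : ℝ) + 1) / ((k : ℝ) + 2)) : ℝ) : ℂ) * x (k + 1))

include hW

lemma Wx_apply (x : l2) (k : ℕ) : (W x) k = (wt k : ℂ) * x (k + 1) := hW x k

lemma normW_le (x : l2) : ‖W x‖ ≤ ‖x‖ := by
  have key : ‖W x‖ ^ 2 ≤ ‖x‖ ^ 2 := by
    rw [norm_sq, norm_sq]
    have s3 : Summable fun k => ‖x k‖ ^ 2 := summable_sq x
    have s2 : Summable fun k => ‖x (k + 1)‖ ^ 2 :=
      s3.comp_injective (add_left_injective 1)
    have h1 : ∀ k, ‖(W x) k‖ ^ 2 ≤ ‖x (k + 1)‖ ^ 2 := by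
      intro k
      rw [Wx_apply hW]
      rw [norm_mul, Complex.norm_real, Real.norm_eq_abs, abs_of_pos (wt_pos k)]
      rw [mul_pow]
      have h2 : wt k ^ 2 ≤ 1 := pow_le_one₀ (le_of_lt (wt_pos k)) (wt_le_one k)
      nlinarith [sq_nonneg ‖x (k+1)‖]
    calc ∑' k, ‖(W x) k‖ ^ 2 ≤ ∑' k, ‖x (k + 1)‖ ^ 2 :=
          Summable.tsum_le_tsum h1 (summable_sq (W x)) s2
      _ ≤ ∑' k, ‖x k‖ ^ 2 := by
          apply Summable.tsum_le_tsum_of_inj (fun k => k + 1) (add_left_injective 1)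
          · intro a _; positivity
          · intro k; exact le_rfl
          · exact s2
          · exact s3
  exact (pow_le_pow_iff_left₀ (norm_nonneg _) (norm_nonneg _) two_ne_zero).1 key

lemma hco {lam : ℂ} {x : l2} (hx : opShift W lam x = 0) (k : ℕ) :
    (wt k : ℂ) * x (k + 1) = lam * x k := by
  have h0 : (opShift W lam x) k = 0 := by rw [hx]; rfl
  rw [opShift_apply, Wx_apply hW] at h0
  linear_combination h0

lemma ker_formula {lam : ℂ} {x : l2} (hx : opShift W lam x = 0) (k : ℕ) :
    x k = lam ^ k * (Real.sqrt ((k : ℝ) + 1) : ℂ) * x 0 := by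
  induction k with
  | zero => simp
  | succ k ih =>
    have h := hco hW hx k
    rw [ih] at h
    have hw : ((wt k : ℝ) : ℂ) ≠ 0 := by
      exact_mod_cast ne_of_gt (wt_pos k)
    have hmul : ((wt k : ℝ) : ℂ) * (Real.sqrt ((k : ℝ) + 1 + 1) : ℂ)
        = (Real.sqrt ((k : ℝ) + 1) : ℂ) := by
      rw [← Complex.ofReal_mul]
      congr 1
      rw [show ((k : ℝ) + 1 + 1) = (k : ℝ) + 2 by ring]
      exact wt_mul k
    apply mul_left_cancel₀ hw
    rw [h]
    push_cast
    rw [show ((wt k : ℝ) : ℂ) * (lam ^ (k+1) * (Real.sqrt ((k : ℝ) + 1 + 1) : ℂ) * x 0)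
        = (((wt k : ℝ) : ℂ) * (Real.sqrt ((k : ℝ) + 1 + 1) : ℂ)) * (lam ^ (k+1) * x 0) by ring,
      hmul]
    ring


omit hW in
lemma wt_mul_c (k : ℕ) :
    ((wt k : ℝ) : ℂ) * (Real.sqrt ((k : ℝ) + 1 + 1) : ℂ) = (Real.sqrt ((k : ℝ) + 1) : ℂ) := by
  rw [← Complex.ofReal_mul]
  congr 1
  rw [show ((k : ℝ) + 1 + 1) = (k : ℝ) + 2 by ring]
  exact wt_mul k

omit hW in
def vf (lam : ℂ) : ℕ → ℂ := fun k => lam ^ k * (Real.sqrt ((k : ℝ) + 1) : ℂ)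

omit hW in
lemma vf_norm_sq (lam : ℂ) (k : ℕ) : ‖vf lam k‖ ^ 2 = ((k : ℝ) + 1) * (‖lam‖ ^ 2) ^ k := by
  simp only [vf, norm_mul, norm_pow, Complex.norm_real, Real.norm_eq_abs,
    abs_of_nonneg (Real.sqrt_nonneg _)]
  rw [mul_pow, Real.sq_sqrt (by positivity : (0:ℝ) ≤ (k:ℝ)+1), ← pow_mul,
    mul_comm k 2, pow_mul]
  ring

omit hW in
lemma vf_summable {lam : ℂ} (h : ‖lam‖ < 1) : Summable fun k => ‖vf lam k‖ ^ 2 := by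
  have hr : ‖(‖lam‖ ^ 2 : ℝ)‖ < 1 := by
    rw [Real.norm_eq_abs, abs_of_nonneg (by positivity)]
    nlinarith [norm_nonneg lam]
  have s1 := summable_pow_mul_geometric_of_norm_lt_one (R := ℝ) 1 hr
  have s2 := summable_geometric_of_norm_lt_one hr
  refine (s1.add s2).congr fun k => ?_
  rw [vf_norm_sq]; push_cast; ring

omit hW in
def vvec (lam : ℂ) (h : ‖lam‖ < 1) : l2 := ⟨vf lam, memℓp_two_of_sq (vf_summable h)⟩

omit hW in
lemma vvec_apply (lam : ℂ) (h : ‖lam‖ < 1) (k : ℕ) : (vvec lam h) k = vf lam k := rfl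

omit hW in
lemma vvec_ne_zero (lam : ℂ) (h : ‖lam‖ < 1) : vvec lam h ≠ 0 := by
  intro h0
  have h1 : vf lam 0 = 0 := by
    have := congrArg (fun f : l2 => (f : ℕ → ℂ) 0) h0
    simpa [vvec_apply] using this
  simp [vf] at h1

lemma vvec_eigen {lam : ℂ} (h : ‖lam‖ < 1) : opShift W lam (vvec lam h) = 0 := by
  apply lp.ext
  funext k
  have hz : ((0 : l2) : ℕ → ℂ) k = 0 := rfl
  rw [hz]
  show (opShift W lam (vvec lam h)) k = 0
  rw [opShift_apply, Wx_apply hW, vvec_apply, vvec_apply, vf, vf]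
  push_cast
  linear_combination lam * lam ^ k * wt_mul_c k

lemma ker_triv {lam : ℂ} (h1 : 1 ≤ ‖lam‖) {x : l2} (hx : opShift W lam x = 0) : x = 0 := by
  have h0 : x 0 = 0 := by
    by_contra hne
    have hpos : (0:ℝ) < ‖x 0‖ ^ 2 := pow_pos (norm_pos_iff.mpr hne) 2
    have ht := (summable_sq x).tendsto_atTop_zero
    obtain ⟨k, hk⟩ := (ht.eventually (gt_mem_nhds hpos)).exists
    have hfk := ker_formula hW hx k
    have hnorm : ‖x k‖ ^ 2 = (‖lam‖ ^ 2) ^ k * ((k:ℝ) + 1) * ‖x 0‖ ^ 2 := by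
      rw [hfk]
      simp only [norm_mul, norm_pow, Complex.norm_real, Real.norm_eq_abs,
        abs_of_nonneg (Real.sqrt_nonneg _)]
      rw [mul_pow, mul_pow, Real.sq_sqrt (by positivity : (0:ℝ) ≤ (k:ℝ)+1), ← pow_mul,
        mul_comm k 2, pow_mul]
    have hge1 : (1:ℝ) ≤ (‖lam‖ ^ 2) ^ k := one_le_pow₀ (by nlinarith [norm_nonneg lam])
    have hge2 : (1:ℝ) ≤ (k:ℝ) + 1 := by have : (0:ℝ) ≤ (k:ℝ) := Nat.cast_nonneg k; linarith
    rw [hnorm] at hk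
    have hmm : (1:ℝ) * 1 ≤ (‖lam‖ ^ 2) ^ k * ((k:ℝ) + 1) :=
      mul_le_mul hge1 hge2 zero_le_one (le_trans zero_le_one hge1)
    nlinarith [hmm, hpos]
  apply lp.ext
  funext k
  have := ker_formula hW hx k
  rw [h0, mul_zero] at this
  exact this

omit hW in
lemma unit_ker_range {T : l2 →L[ℂ] l2} (h : IsUnit T) :
    LinearMap.ker (T : l2 →ₗ[ℂ] l2) = ⊥ ∧ LinearMap.range (T : l2 →ₗ[ℂ] l2) = ⊤ := by
  obtain ⟨u, rfl⟩ := h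
  constructor
  · rw [LinearMap.ker_eq_bot']
    intro m hm
    rw [ContinuousLinearMap.coe_coe] at hm
    have : ((↑u⁻¹ * ↑u : l2 →L[ℂ] l2)) m = ((1 : l2 →L[ℂ] l2)) m := by rw [u.inv_mul]
    rw [ContinuousLinearMap.mul_apply, hm, map_zero, ContinuousLinearMap.one_apply] at this
    exact this.symm
  · rw [LinearMap.range_eq_top]
    intro y
    refine ⟨(↑u⁻¹ : l2 →L[ℂ] l2) y, ?_⟩
    have : ((↑u * ↑u⁻¹ : l2 →L[ℂ] l2)) y = ((1 : l2 →L[ℂ] l2)) y := by rw [u.mul_inv]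
    rw [ContinuousLinearMap.mul_apply, ContinuousLinearMap.one_apply] at this
    exact this

omit hW in
lemma opShift_neg_alg (W : l2 →L[ℂ] l2) (lam : ℂ) :
    opShift W lam = -(algebraMap ℂ (l2 →L[ℂ] l2) lam - W) := by
  rw [Algebra.algebraMap_eq_smul_one, opShift, neg_sub, ContinuousLinearMap.one_def]

omit hW in
lemma isUnit_opShift {lam : ℂ} (h : lam ∉ spectrum ℂ W) : IsUnit (opShift W lam) := by
  rw [spectrum.notMem_iff] at h
  rw [opShift_neg_alg]
  exact h.neg

lemma mem_spectrum_of_small {mu : ℂ} (h : ‖mu‖ < 1) : mu ∈ spectrum ℂ W := by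
  by_contra hs
  have hu := isUnit_opShift (W := W) hs
  have hker := (unit_ker_range hu).1
  have hv : vvec mu h ∈ LinearMap.ker (opShift W mu : l2 →ₗ[ℂ] l2) := LinearMap.mem_ker.2 (vvec_eigen hW h)
  rw [hker, Submodule.mem_bot] at hv
  exact vvec_ne_zero mu h hv


def tf (lam : ℂ) (N : ℕ) : ℕ → ℂ :=
  fun k => if k ≤ N then lam ^ k * (Real.sqrt ((k : ℝ) + 1) : ℂ) else 0

omit hW in
lemma tf_mem (lam : ℂ) (N : ℕ) : Memℓp (tf lam N) 2 := by
  apply memℓp_gen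
  apply summable_of_ne_finset_zero (s := Finset.range (N + 1))
  intro k hk
  have hk' : ¬ k ≤ N := by simpa [Nat.lt_succ_iff] using hk
  have h0 : tf lam N k = 0 := if_neg hk'
  rw [h0, norm_zero]
  simp only [ENNReal.toReal_ofNat]
  exact Real.zero_rpow (by norm_num)

def tvec (lam : ℂ) (N : ℕ) : l2 := ⟨tf lam N, tf_mem lam N⟩

omit hW in
lemma tvec_apply (lam : ℂ) (N k : ℕ) : (tvec lam N) k = tf lam N k := rfl

omit hW in
lemma gauss (n : ℕ) : ∑ k ∈ Finset.range n, ((k : ℝ) + 1) = n * (n + 1) / 2 := by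
  induction n with
  | zero => simp
  | succ n ih => rw [Finset.sum_range_succ, ih]; push_cast; ring

omit hW in
lemma tvec_norm_sq_ge {lam : ℂ} (hl : ‖lam‖ = 1) (N : ℕ) :
    ((N : ℝ) + 1) * ((N : ℝ) + 2) / 2 ≤ ‖tvec lam N‖ ^ 2 := by
  have h := lp.sum_rpow_le_norm_rpow (p := (2 : ℝ≥0∞)) (by norm_num) (tvec lam N)
    (Finset.range (N + 1))
  simp only [ENNReal.toReal_ofNat] at h
  have h2 : ∑ k ∈ Finset.range (N + 1), ‖(tvec lam N) k‖ ^ (2 : ℝ)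
      = ∑ k ∈ Finset.range (N + 1), ((k : ℝ) + 1) := by
    refine Finset.sum_congr rfl fun k hk => ?_
    have hk' : k ≤ N := Nat.lt_succ_iff.mp (Finset.mem_range.mp hk)
    rw [tvec_apply, show tf lam N k = lam ^ k * (Real.sqrt ((k : ℝ) + 1) : ℂ) from if_pos hk']
    rw [norm_mul, norm_pow, hl, one_pow, one_mul, Complex.norm_real, Real.norm_eq_abs,
      abs_of_nonneg (Real.sqrt_nonneg _), Real.rpow_two, Real.sq_sqrt (by positivity)]
  rw [h2, gauss (N + 1)] at h
  have h3 : ‖tvec lam N‖ ^ (2 : ℝ) = ‖tvec lam N‖ ^ 2 := Real.rpow_two _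
  rw [h3] at h
  push_cast at h
  linarith

lemma tvec_shift (lam : ℂ) (N : ℕ) :
    opShift W lam (tvec lam N)
      = lp.single 2 N (-(lam ^ (N + 1) * (Real.sqrt ((N : ℝ) + 1) : ℂ))) := by
  apply lp.ext
  funext k
  show (opShift W lam (tvec lam N)) k = _
  rw [opShift_apply, Wx_apply hW, tvec_apply, tvec_apply]
  rcases lt_trichotomy k N with hk | hk | hk
  · rw [lp.single_apply_ne 2 N _ (ne_of_lt hk)]
    rw [show tf lam N k = lam ^ k * (Real.sqrt ((k : ℝ) + 1) : ℂ) from if_pos (le_of_lt hk)]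
    rw [show tf lam N (k + 1) = lam ^ (k + 1) * (Real.sqrt (((k + 1 : ℕ) : ℝ) + 1) : ℂ)
      from if_pos hk]
    push_cast
    linear_combination lam * lam ^ k * wt_mul_c k
  · subst hk
    rw [lp.single_apply_self]
    rw [show tf lam k k = lam ^ k * (Real.sqrt ((k : ℝ) + 1) : ℂ) from if_pos le_rfl]
    rw [show tf lam k (k + 1) = 0 from if_neg (by omega)]
    ring
  · rw [lp.single_apply_ne 2 N _ (ne_of_gt hk)]
    rw [show tf lam N k = 0 from if_neg (by omega)]
    rw [show tf lam N (k + 1) = 0 from if_neg (by omega)]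
    ring

lemma not_bdd {lam : ℂ} (hl : ‖lam‖ = 1) :
    ¬ ∃ c > 0, ∀ x : l2, c * ‖x‖ ≤ ‖opShift W lam x‖ := by
  rintro ⟨c, hc, hb⟩
  obtain ⟨N, hN⟩ := exists_nat_gt (2 / c ^ 2)
  have hx := hb (tvec lam N)
  have hshift : ‖opShift W lam (tvec lam N)‖ = Real.sqrt ((N : ℝ) + 1) := by
    rw [tvec_shift hW]
    rw [lp.norm_single (E := fun _ : ℕ => ℂ) (p := (2 : ℝ≥0∞)) (by norm_num) N
      (-(lam ^ (N + 1) * (Real.sqrt ((N : ℝ) + 1) : ℂ)))]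
    rw [norm_neg, norm_mul, norm_pow, hl, one_pow, one_mul, Complex.norm_real,
      Real.norm_eq_abs, abs_of_nonneg (Real.sqrt_nonneg _)]
  have hlow := tvec_norm_sq_ge hl N
  -- squares
  have hsq : (c * ‖tvec lam N‖) ^ 2 ≤ Real.sqrt ((N : ℝ) + 1) ^ 2 := by
    rw [← hshift]
    exact pow_le_pow_left₀ (by positivity) hx 2
  rw [Real.sq_sqrt (by positivity), mul_pow] at hsq
  have hNr : (0:ℝ) < c ^ 2 := by positivity
  have hN2 : 2 / c ^ 2 < (N : ℝ) := hN
  have hN3 : 2 < c ^ 2 * ((N : ℝ) + 2) := by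
    rw [div_lt_iff₀ hNr] at hN2
    nlinarith
  nlinarith [hlow, hsq, hN3, hNr]

omit hW in
lemma bdd_of_closed {F : Type*} [NormedAddCommGroup F] [NormedSpace ℂ F] [CompleteSpace F]
    {T : F →L[ℂ] F} (hker : LinearMap.ker (T : F →ₗ[ℂ] F) = ⊥)
    (hcl : IsClosed ((LinearMap.range (T : F →ₗ[ℂ] F) : Submodule ℂ F) : Set F)) :
    ∃ c > 0, ∀ x : F, c * ‖x‖ ≤ ‖T x‖ := by
  haveI : CompleteSpace (LinearMap.range (T : F →ₗ[ℂ] F)) := hcl.completeSpace_coe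
  set T' : F →L[ℂ] (LinearMap.range (T : F →ₗ[ℂ] F)) :=
    T.codRestrict _ (fun x => LinearMap.mem_range_self _ x) with hT'
  have hker' : LinearMap.ker (T' : F →ₗ[ℂ] (LinearMap.range (T : F →ₗ[ℂ] F))) = ⊥ := by
    rw [hT', ContinuousLinearMap.ker_codRestrict]; exact hker
  have hrange' : LinearMap.range (T' : F →ₗ[ℂ] (LinearMap.range (T : F →ₗ[ℂ] F))) = ⊤ := by
    rw [LinearMap.range_eq_top]
    intro y
    exact ⟨y.2.choose, Subtype.ext y.2.choose_spec⟩
  set e := ContinuousLinearEquiv.ofBijective T' hker' hrange' with he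
  set K := ‖(e.symm : (LinearMap.range (T : F →ₗ[ℂ] F)) →L[ℂ] F)‖ with hK
  have hK0 : 0 ≤ K := norm_nonneg _
  refine ⟨(K + 1)⁻¹, by positivity, fun x => ?_⟩
  have hex : e x = T' x := by
    rw [he]; exact congrFun (ContinuousLinearEquiv.coeFn_ofBijective T' hker' hrange') x
  have h2 : ‖e x‖ = ‖T x‖ := by
    rw [hex]
    rfl
  have h1 : ‖x‖ ≤ K * ‖T x‖ := by
    calc ‖x‖ = ‖e.symm (e x)‖ := by rw [e.symm_apply_apply]
      _ ≤ K * ‖e x‖ := by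
          have h3 := (e.symm : (LinearMap.range (T : F →ₗ[ℂ] F)) →L[ℂ] F).le_opNorm (e x)
          simpa using h3
      _ = K * ‖T x‖ := by rw [h2]
  rw [inv_mul_le_iff₀ (by positivity)]
  nlinarith [norm_nonneg (T x)]


omit hW in
lemma memℓp_of_fin {f : ℕ → ℂ} (N : ℕ) (h : ∀ k, N < k → f k = 0) : Memℓp f 2 := by
  apply memℓp_gen
  apply summable_of_ne_finset_zero (s := Finset.range (N + 1))
  intro k hk
  rw [h k (by simpa [Nat.lt_succ_iff] using hk), norm_zero]
  simp only [ENNReal.toReal_ofNat]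
  exact Real.zero_rpow (by norm_num)

omit hW in
lemma wt_mul_c' (k n : ℕ) :
    ((wt k : ℝ) : ℂ) * ((Real.sqrt (((k : ℝ) + 2) / ((n : ℝ) + 1)) : ℝ) : ℂ)
      = ((Real.sqrt (((k : ℝ) + 1) / ((n : ℝ) + 1)) : ℝ) : ℂ) := by
  rw [← Complex.ofReal_mul]
  congr 1
  rw [wt, ← Real.sqrt_mul (by positivity)]
  congr 1
  field_simp

lemma single_mem_range {lam : ℂ} (n : ℕ) (a : ℂ) :
    lp.single 2 n a ∈ LinearMap.range (opShift W lam : l2 →ₗ[ℂ] l2) := by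
  by_cases h0 : lam = 0
  · subst h0
    refine ⟨lp.single 2 (n + 1) (((wt n : ℝ) : ℂ)⁻¹ * a), ?_⟩
    apply lp.ext
    funext k
    show (opShift W 0 _) k = _
    rw [opShift_apply, Wx_apply hW]
    simp only [zero_mul, sub_zero]
    rcases eq_or_ne k n with rfl | hk
    · rw [lp.single_apply_self, lp.single_apply_self]
      have : ((wt k : ℝ) : ℂ) ≠ 0 := by exact_mod_cast ne_of_gt (wt_pos k)
      field_simp
    · rw [lp.single_apply_ne 2 (n + 1) _ (by omega : k + 1 ≠ n + 1),
        lp.single_apply_ne 2 n _ hk, mul_zero]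
  · set gf : ℕ → ℂ := fun k =>
      if k ≤ n then -(((Real.sqrt (((k : ℝ) + 1) / ((n : ℝ) + 1)) : ℝ) : ℂ)
        * lam ^ k / lam ^ (n + 1)) * a else 0 with hgf
    have hmem : Memℓp gf 2 := memℓp_of_fin n (fun k hk => if_neg (by omega))
    refine ⟨⟨gf, hmem⟩, ?_⟩
    apply lp.ext
    funext k
    show (opShift W lam _) k = _
    rw [opShift_apply, Wx_apply hW]
    have hg : ∀ j, (⟨gf, hmem⟩ : l2) j = gf j := fun j => rfl
    rw [hg, hg]
    rcases lt_trichotomy k n with hk | hk | hk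
    · rw [lp.single_apply_ne 2 n _ (ne_of_lt hk)]
      rw [show gf k = -(((Real.sqrt (((k : ℝ) + 1) / ((n : ℝ) + 1)) : ℝ) : ℂ)
        * lam ^ k / lam ^ (n + 1)) * a from if_pos (le_of_lt hk)]
      rw [show gf (k + 1) = -(((Real.sqrt ((((k + 1 : ℕ) : ℝ) + 1) / ((n : ℝ) + 1)) : ℝ) : ℂ)
        * lam ^ (k + 1) / lam ^ (n + 1)) * a from if_pos hk]
      push_cast
      have hc2 : ((wt k : ℝ) : ℂ) * ((Real.sqrt (((k : ℝ) + 1 + 1) / ((n : ℝ) + 1)) : ℝ) : ℂ)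
          = ((Real.sqrt (((k : ℝ) + 1) / ((n : ℝ) + 1)) : ℝ) : ℂ) := by
        rw [show (k : ℝ) + 1 + 1 = (k : ℝ) + 2 by ring]
        exact wt_mul_c' k n
      linear_combination (-(a * lam ^ (k + 1)) / lam ^ (n + 1)) * hc2
    · subst hk
      rw [lp.single_apply_self]
      rw [show gf k = -(((Real.sqrt (((k : ℝ) + 1) / ((k : ℝ) + 1)) : ℝ) : ℂ)
        * lam ^ k / lam ^ (k + 1)) * a from if_pos le_rfl]
      rw [show gf (k + 1) = 0 from if_neg (by omega)]
      rw [show (((k : ℝ) + 1) / ((k : ℝ) + 1)) = 1 from div_self (by positivity),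
        Real.sqrt_one]
      have hlam : lam ^ (k + 1) ≠ 0 := pow_ne_zero _ h0
      push_cast
      field_simp
      ring
    · rw [lp.single_apply_ne 2 n _ (ne_of_gt hk)]
      rw [show gf k = 0 from if_neg (by omega),
        show gf (k + 1) = 0 from if_neg (by omega)]
      ring

omit hW in
lemma range_eq_top_of_closed {T : l2 →L[ℂ] l2}
    (hs : ∀ (n : ℕ) (a : ℂ), lp.single 2 n a ∈ LinearMap.range (T : l2 →ₗ[ℂ] l2))
    (hcl : IsClosed ((LinearMap.range (T : l2 →ₗ[ℂ] l2) : Submodule ℂ l2) : Set l2)) :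
    LinearMap.range (T : l2 →ₗ[ℂ] l2) = ⊤ := by
  rw [Submodule.eq_top_iff']
  intro f
  have hsum := lp.hasSum_single (E := fun _ : ℕ => ℂ) (p := 2) (by norm_num) f
  have hmem : ∀ s : Finset ℕ,
      (∑ i ∈ s, lp.single 2 i (f i)) ∈ ((LinearMap.range (T : l2 →ₗ[ℂ] l2) : Submodule ℂ l2) : Set l2) :=
    fun s => Submodule.sum_mem _ (fun i _ => hs i (f i))
  exact hcl.mem_of_tendsto hsum (Filter.Eventually.of_forall hmem)

end St17

namespace St17

variable {W : l2 →L[ℂ] l2}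
  (hW : ∀ (x : l2) (k : ℕ), (W x) k =
      ((Real.sqrt (((k : ℝ) + 1) / ((k : ℝ) + 2)) : ℝ) : ℂ) * x (k + 1))

include hW

lemma norm_W_le_one : ‖W‖ ≤ 1 :=
  ContinuousLinearMap.opNorm_le_bound W zero_le_one (fun x => by simpa using normW_le hW x)

set_option synthInstance.maxHeartbeats 1000000 in
lemma spectrum_subset : spectrum ℂ W ⊆ Metric.closedBall (0 : ℂ) 1 := by
  intro lam hl
  have h1 := spectrum.subset_closedBall_norm (𝕜 := ℂ) W hl
  rw [Metric.mem_closedBall] at h1 ⊢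
  exact le_trans h1 (norm_W_le_one hW)

lemma ker_nontrivial {lam : ℂ} (h : ‖lam‖ < 1) :
    Nontrivial (LinearMap.ker (opShift W lam : l2 →ₗ[ℂ] l2)) := by
  refine nontrivial_of_ne ⟨vvec lam h, LinearMap.mem_ker.2 (vvec_eigen hW h)⟩ 0 ?_
  intro hh
  exact vvec_ne_zero lam h (congrArg Subtype.val hh)

lemma specUW_eq : specUW W = Metric.closedBall (0 : ℂ) 1 := by
  apply Set.Subset.antisymm
  · intro lam hl
    by_contra hnot
    have hns : lam ∉ spectrum ℂ W := fun hs => hnot (spectrum_subset hW hs)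
    have hu := isUnit_opShift hns
    obtain ⟨hker, hrange⟩ := unit_ker_range hu
    apply hl
    refine ⟨⟨?_, ?_⟩, ?_⟩
    · rw [hrange]
      rw [Submodule.top_coe]
      exact isClosed_univ
    · rw [hker]
      haveI : Subsingleton ↥(⊥ : Submodule ℂ l2) := inferInstance
      exact Module.finite_of_rank_eq_zero (rank_subsingleton' _ _)
    · unfold indexNonpos
      rw [hker]
      haveI : Subsingleton ↥(⊥ : Submodule ℂ l2) := inferInstance
      rw [rank_subsingleton' ℂ]
      exact zero_le
  · intro lam hld
    rw [mem_closedBall_zero_iff] at hld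
    show ¬ _
    rintro ⟨husf, hind⟩
    rcases lt_or_eq_of_le hld with hlt | heq
    · have hrange := range_eq_top_of_closed (fun n a => single_mem_range hW n a) husf.1
      have hq : Module.rank ℂ (l2 ⧸ LinearMap.range (opShift W lam : l2 →ₗ[ℂ] l2)) = 0 := by
        haveI : Subsingleton (l2 ⧸ LinearMap.range (opShift W lam : l2 →ₗ[ℂ] l2)) :=
          Submodule.Quotient.subsingleton_iff.mpr hrange
        exact rank_subsingleton' _ _
      have hker : 0 < Module.rank ℂ (LinearMap.ker (opShift W lam : l2 →ₗ[ℂ] l2)) := by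
        haveI := ker_nontrivial hW hlt
        exact rank_pos
      unfold indexNonpos at hind
      rw [hq] at hind
      exact absurd (le_antisymm hind zero_le) (ne_of_gt hker)
    · have hker : LinearMap.ker (opShift W lam : l2 →ₗ[ℂ] l2) = ⊥ := by
        rw [LinearMap.ker_eq_bot']
        intro m hm
        exact ker_triv hW (le_of_eq heq.symm) hm
      exact not_bdd hW heq (bdd_of_closed hker husf.1)

lemma specW_eq : specW W = Metric.closedBall (0 : ℂ) 1 := by
  apply Set.Subset.antisymm
  · intro lam hl
    by_contra hnot
    have hns : lam ∉ spectrum ℂ W := fun hs => hnot (spectrum_subset hW hs)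
    have hu := isUnit_opShift hns
    obtain ⟨hker, hrange⟩ := unit_ker_range hu
    apply hl
    haveI hbot : Subsingleton ↥(⊥ : Submodule ℂ l2) := inferInstance
    haveI hqt : Subsingleton (l2 ⧸ LinearMap.range (opShift W lam : l2 →ₗ[ℂ] l2)) :=
      Submodule.Quotient.subsingleton_iff.mpr hrange
    have hclosed : IsClosed ((LinearMap.range (opShift W lam : l2 →ₗ[ℂ] l2) : Submodule ℂ l2) : Set l2) := by
      rw [hrange, Submodule.top_coe]
      exact isClosed_univ
    refine ⟨⟨⟨hclosed, ?_⟩, ⟨hclosed, ?_⟩⟩, ?_⟩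
    · rw [hker]
      exact Module.finite_of_rank_eq_zero (rank_subsingleton' _ _)
    · exact Module.finite_of_rank_eq_zero (rank_subsingleton' _ _)
    · unfold indexZero
      rw [hker]
      rw [rank_subsingleton' ℂ, rank_subsingleton' ℂ]
  · intro lam hld
    rw [mem_closedBall_zero_iff] at hld
    show ¬ _
    rintro ⟨hfred, hind⟩
    rcases lt_or_eq_of_le hld with hlt | heq
    · have hrange := range_eq_top_of_closed (fun n a => single_mem_range hW n a) hfred.1.1
      have hq : Module.rank ℂ (l2 ⧸ LinearMap.range (opShift W lam : l2 →ₗ[ℂ] l2)) = 0 := by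
        haveI : Subsingleton (l2 ⧸ LinearMap.range (opShift W lam : l2 →ₗ[ℂ] l2)) :=
          Submodule.Quotient.subsingleton_iff.mpr hrange
        exact rank_subsingleton' _ _
      have hker : 0 < Module.rank ℂ (LinearMap.ker (opShift W lam : l2 →ₗ[ℂ] l2)) := by
        haveI := ker_nontrivial hW hlt
        exact rank_pos
      unfold indexZero at hind
      rw [hq] at hind
      exact absurd hind (ne_of_gt hker)
    · have hker : LinearMap.ker (opShift W lam : l2 →ₗ[ℂ] l2) = ⊥ := by
        rw [LinearMap.ker_eq_bot']
        intro m hm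
        exact ker_triv hW (le_of_eq heq.symm) hm
      exact not_bdd hW heq (bdd_of_closed hker hfred.1.1)

lemma specA_subset : specA W ⊆ Metric.closedBall (0 : ℂ) 1 := by
  intro lam hl
  rw [mem_closedBall_zero_iff]
  by_contra hn
  push_neg at hn
  apply hl
  refine ⟨‖lam‖ - 1, by linarith, fun x => ?_⟩
  have h1 : ‖W x‖ ≤ ‖x‖ := normW_le hW x
  have h2 : ‖lam • x‖ - ‖W x‖ ≤ ‖lam • x - W x‖ := norm_sub_norm_le _ _
  rw [norm_smul] at h2
  rw [show W x - lam • x = -(lam • x - W x) by abel, norm_neg]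
  have h3 := norm_nonneg x
  nlinarith

lemma Eset_empty : Eset W = ∅ := by
  rw [Set.eq_empty_iff_forall_notMem]
  rintro lam ⟨⟨hmem, ε, hε, hiso⟩, x, hx0, hxe⟩
  have hxe' : opShift W lam x = 0 := by rw [opShift_eval, hxe, sub_self]
  have hlt : ‖lam‖ < 1 := by
    by_contra hge
    push_neg at hge
    exact hx0 (ker_triv hW hge hxe')
  set δ := min ε (1 - ‖lam‖) with hδ
  have hδ0 : 0 < δ := lt_min hε (by linarith)
  set mu := lam + ((δ / 2 : ℝ) : ℂ) with hmu
  have hmu1 : ‖mu‖ < 1 := by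
    have hle : ‖mu‖ ≤ ‖lam‖ + ‖((δ / 2 : ℝ) : ℂ)‖ := norm_add_le _ _
    rw [Complex.norm_real, Real.norm_eq_abs, abs_of_pos (by linarith)] at hle
    have : δ ≤ 1 - ‖lam‖ := min_le_right _ _
    linarith
  have hmus : mu ∈ spectrum ℂ W := mem_spectrum_of_small hW hmu1
  have hmub : mu ∈ Metric.ball lam ε := by
    rw [Metric.mem_ball, dist_eq_norm, hmu, add_sub_cancel_left, Complex.norm_real,
      Real.norm_eq_abs, abs_of_pos (by linarith)]
    have : δ ≤ ε := min_le_left _ _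
    linarith
  have hin : mu ∈ spectrum ℂ W ∩ Metric.ball lam ε := ⟨hmus, hmub⟩
  rw [hiso] at hin
  have heq : mu = lam := hin
  rw [hmu, add_eq_left, Complex.ofReal_eq_zero] at heq
  linarith

omit hW in
lemma cb_no_iso (lam : ℂ) : ¬ IsIsolatedIn (Metric.closedBall (0 : ℂ) 1) lam := by
  rintro ⟨hmem, ε, hε, hiso⟩
  rw [mem_closedBall_zero_iff] at hmem
  by_cases h0 : lam = 0
  · subst h0
    set c := min (ε / 2) (1 / 2) with hc
    have hc0 : 0 < c := lt_min (by linarith) (by norm_num)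
    have h1 : ((c : ℝ) : ℂ) ∈ Metric.closedBall (0 : ℂ) 1 ∩ Metric.ball 0 ε := by
      constructor
      · rw [mem_closedBall_zero_iff, Complex.norm_real, Real.norm_eq_abs, abs_of_pos hc0]
        have : c ≤ 1 / 2 := min_le_right _ _
        linarith
      · rw [Metric.mem_ball, dist_zero_right, Complex.norm_real, Real.norm_eq_abs,
          abs_of_pos hc0]
        have : c ≤ ε / 2 := min_le_left _ _
        linarith
    rw [hiso] at h1
    have h2 : ((c : ℝ) : ℂ) = 0 := h1
    rw [Complex.ofReal_eq_zero] at h2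
    linarith
  · have hl0 : 0 < ‖lam‖ := norm_pos_iff.mpr h0
    set c := min (ε / (2 * ‖lam‖)) (1 / 2) with hc
    have hc0 : 0 < c := lt_min (by positivity) (by norm_num)
    have hc1 : c ≤ 1 / 2 := min_le_right _ _
    have hc2 : c ≤ ε / (2 * ‖lam‖) := min_le_left _ _
    set mu := ((1 - c : ℝ) : ℂ) * lam with hmu
    have hsub : mu - lam = -(((c : ℝ) : ℂ) * lam) := by
      rw [hmu]
      push_cast
      ring
    have hnorme : ‖mu - lam‖ = c * ‖lam‖ := by
      rw [hsub, norm_neg, norm_mul, Complex.norm_real, Real.norm_eq_abs, abs_of_pos hc0]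
    have h1 : mu ∈ Metric.closedBall (0 : ℂ) 1 ∩ Metric.ball lam ε := by
      constructor
      · rw [mem_closedBall_zero_iff, hmu, norm_mul, Complex.norm_real, Real.norm_eq_abs,
          abs_of_pos (by linarith : (0:ℝ) < 1 - c)]
        nlinarith
      · rw [Metric.mem_ball, dist_eq_norm, hnorme]
        have : c * ‖lam‖ ≤ (ε / (2 * ‖lam‖)) * ‖lam‖ := by
          apply mul_le_mul_of_nonneg_right hc2 (le_of_lt hl0)
        have hfe : (ε / (2 * ‖lam‖)) * ‖lam‖ = ε / 2 := by
          rw [div_mul_eq_mul_div, mul_comm (2 : ℝ) ‖lam‖, ← div_div, mul_div_assoc,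
            div_self (ne_of_gt hl0), mul_one]
        linarith
    rw [hiso] at h1
    have h2 : mu = lam := h1
    have h3 : ‖mu - lam‖ = 0 := by rw [h2, sub_self, norm_zero]
    rw [hnorme] at h3
    nlinarith

end St17

open St17 in
/-- the weighted backward shift `W e₀ = 0`,
`W eₙ = √(n/(n+1)) e_{n-1}` for `n ≥ 1` (equivalently
`(Wx)ₖ = √((k+1)/(k+2)) x_{k+1}`) satisfies property `(V_E)`, hence property
`(UW_E)`; moreover `σ_w(W)` and `σ_uw(W)` have no isolated points. -/
theorem stmt17_bergman_Tzbar_shift_example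
    (W : l2 →L[ℂ] l2)
    (hW : ∀ (x : l2) (k : ℕ), (W x) k =
      ((Real.sqrt (((k : ℝ) + 1) / ((k : ℝ) + 2)) : ℝ) : ℂ) * x (k + 1)) :
    PropVE W ∧
    PropUWE W ∧
    (∀ lam : ℂ, ¬ IsIsolatedIn (specW W) lam) ∧
    (∀ lam : ℂ, ¬ IsIsolatedIn (specUW W) lam) := by
  have hUW := specUW_eq hW
  have hw := specW_eq hW
  have hsub := spectrum_subset hW
  have hE := Eset_empty hW
  refine ⟨?_, ?_, ?_, ?_⟩
  · unfold PropVE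
    rw [hE, hUW, Set.diff_eq_empty.mpr hsub]
  · unfold PropUWE
    rw [hE, hUW, Set.diff_eq_empty.mpr (specA_subset hW)]
  · intro lam
    rw [hw]
    exact cb_no_iso lam
  · intro lam
    rw [hUW]
    exact cb_no_iso lam
end
end
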